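/- If A is a finite-dimensional simple associative (ℤ/2)ⁿ-graded commutative algebra over ℂ (with respect to the standard scalar product on (ℤ/2)ⁿ), then every nonzero homogeneous component A_γ is one-dimensional, and contains an element α with α² = 1. -/

import Mathlib

section Aux

variable {A : Type*} [Ring A]

/-- Every central element of a finite-dimensional simple ℂ-algebra is a scalar. -/
lemma aux_central_scalar [Algebra ℂ A] [FiniteDimensional ℂ A]
    (hsimple : IsSimpleRing A) (z : A) (hz : ∀ y, z * y = y * z) :
    ∃ c : ℂ, z = algebraMap ℂ A c := by
  haveI := hsimple
  have hint : IsIntegral ℂ z := IsIntegral.of_finite ℂ z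
  set p := minpoly ℂ z with hp
  have hp0 : p ≠ 0 := minpoly.ne_zero hint
  have hdeg : 0 < p.natDegree := minpoly.natDegree_pos hint
  obtain ⟨l, hl⟩ := IsAlgClosed.exists_root p
    (Polynomial.natDegree_pos_iff_degree_pos.mp hdeg).ne'
  obtain ⟨q, hq⟩ := (Polynomial.dvd_iff_isRoot.mpr hl)
  have hq0 : q ≠ 0 := by rintro rfl; simp at hq; exact hp0 hq
  have haq : (Polynomial.aeval z) q ≠ 0 := by
    intro h0
    have hle := minpoly.degree_le_of_ne_zero ℂ z hq0 h0
    have : p.natDegree ≤ q.natDegree := Polynomial.natDegree_le_natDegree hle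
    have hdq : p.natDegree = 1 + q.natDegree := by
      rw [hq, Polynomial.natDegree_mul (Polynomial.X_sub_C_ne_zero l) hq0,
        Polynomial.natDegree_X_sub_C]
    omega
  have hmul : (z - algebraMap ℂ A l) * (Polynomial.aeval z) q = 0 := by
    have := minpoly.aeval ℂ z
    rw [← hp, hq, map_mul] at this
    simpa using this
  set w := z - algebraMap ℂ A l with hw
  have hwc : ∀ y, w * y = y * w := by
    intro y
    simp only [hw, sub_mul, mul_sub, hz y, Algebra.commutes]
  let I : TwoSidedIdeal A := TwoSidedIdeal.mk' {x | w * x = 0}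
    (by simp) (fun {x y} hx hy => by simp only [Set.mem_setOf_eq] at *; rw [mul_add, hx, hy, add_zero])
    (fun {x} hx => by simp only [Set.mem_setOf_eq] at *; rw [mul_neg, hx, neg_zero])
    (fun {x y} hy => by
      simp only [Set.mem_setOf_eq] at *
      rw [← mul_assoc, hwc x, mul_assoc, hy, mul_zero])
    (fun {x y} hx => by
      simp only [Set.mem_setOf_eq] at *
      rw [← mul_assoc, hx, zero_mul])
  rcases hsimple.1.eq_bot_or_eq_top I with hI | hI
  · exfalso
    apply haq
    have : (Polynomial.aeval z) q ∈ I := by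
      simp only [I, TwoSidedIdeal.mem_mk', Set.mem_setOf_eq]
      exact hmul
    rwa [hI, TwoSidedIdeal.mem_bot] at this
  · have h1 : (1 : A) ∈ I := by rw [hI]; exact TwoSidedIdeal.mem_top A
    simp only [I, TwoSidedIdeal.mem_mk', Set.mem_setOf_eq, mul_one] at h1
    exact ⟨l, by rwa [hw, sub_eq_zero] at h1⟩

end Aux

/-- If `A` is a finite-dimensional simple associative `(ℤ/2)ⁿ`-graded
commutative ℂ-algebra (with respect to the standard scalar product), then every
nonzero homogeneous component `A_γ` is one-dimensional and contains an element `α`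
with `α² = 1`. -/
theorem stmt4 {n : ℕ} {A : Type*} [Ring A] [Algebra ℂ A] [FiniteDimensional ℂ A]
    (𝒜 : (Fin n → ZMod 2) → Submodule ℂ A) (hgr : GradedAlgebra 𝒜)
    (hcomm : ∀ (γ γ' : Fin n → ZMod 2) (a b : A), a ∈ 𝒜 γ → b ∈ 𝒜 γ' →
      a * b = (-1 : A) ^ (∑ i, γ i * γ' i).val * (b * a))
    (hsimple : IsSimpleRing A) :
    ∀ γ : Fin n → ZMod 2, 𝒜 γ ≠ ⊥ →
      Module.finrank ℂ (𝒜 γ) = 1 ∧ ∃ α ∈ 𝒜 γ, α * α = 1 := by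
  haveI := hgr
  haveI := hsimple
  intro γ hγ
  obtain ⟨a, haγ, ha0⟩ := (Submodule.ne_bot_iff _).1 hγ
  -- step 1: left annihilator of a is trivial
  have hann : ∀ x : A, x * a = 0 → x = 0 := by
    have key : ∀ x : A, x * a = 0 → ∀ y : A, x * (y * a) = 0 := by
      intro x hx
      refine DirectSum.Decomposition.inductionOn 𝒜 (by simp) ?_ ?_
      · rintro γ' ⟨m, hm⟩
        have hcm := hcomm γ' γ m a hm haγ
        rcases Nat.even_or_odd (∑ i, γ' i * γ i).val with he | ho
        · rw [hcm, he.neg_one_pow, one_mul, ← mul_assoc, hx, zero_mul]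
        · rw [hcm, ho.neg_one_pow, neg_one_mul, mul_neg, ← mul_assoc, hx, zero_mul, neg_zero]
      · intro m m' hm hm'
        rw [add_mul, mul_add, hm, hm', add_zero]
    let I : TwoSidedIdeal A := TwoSidedIdeal.mk' {x | x * a = 0}
      (by simp) (fun {x y} hx hy => by simp only [Set.mem_setOf_eq] at *; rw [add_mul, hx, hy, add_zero])
      (fun {x} hx => by simp only [Set.mem_setOf_eq] at *; rw [neg_mul, hx, neg_zero])
      (fun {x y} hy => by
        simp only [Set.mem_setOf_eq] at *
        rw [mul_assoc, hy, mul_zero])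
      (fun {x y} hx => by
        simp only [Set.mem_setOf_eq] at *
        rw [mul_assoc]; exact key x hx y)
    rcases hsimple.1.eq_bot_or_eq_top I with hI | hI
    · intro x hx
      have : x ∈ I := by simp only [I, TwoSidedIdeal.mem_mk', Set.mem_setOf_eq]; exact hx
      rwa [hI, TwoSidedIdeal.mem_bot] at this
    · exfalso
      have h1 : (1 : A) ∈ I := by rw [hI]; exact TwoSidedIdeal.mem_top A
      simp only [I, TwoSidedIdeal.mem_mk', Set.mem_setOf_eq, one_mul] at h1
      exact ha0 h1
  -- step 2: products of two elements of 𝒜 γ are scalars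
  have hγγ : γ + γ = 0 := funext fun i => CharTwo.add_self_eq_zero _
  have hcentral : ∀ z : A, z ∈ 𝒜 0 → ∀ y : A, z * y = y * z := by
    intro z hzmem
    refine DirectSum.Decomposition.inductionOn 𝒜 (by simp) ?_ ?_
    · rintro γ' ⟨m, hm⟩
      have := hcomm 0 γ' z m hzmem hm
      simpa using this
    · intro m m' hm hm'
      rw [mul_add, add_mul, hm, hm']
  have key : ∀ b ∈ 𝒜 γ, ∃ c : ℂ, b * a = algebraMap ℂ A c := by
    intro b hb
    have hmem : b * a ∈ 𝒜 0 := by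
      have := SetLike.mul_mem_graded hb haγ
      rwa [hγγ] at this
    exact aux_central_scalar hsimple _ (hcentral _ hmem)
  obtain ⟨c, hc⟩ := key a haγ
  have hc0 : c ≠ 0 := by
    rintro rfl
    exact ha0 (hann a (by rw [hc, map_zero]))
  constructor
  · -- finrank = 1
    have hspan : 𝒜 γ = ℂ ∙ a := by
      apply le_antisymm
      · intro b hb
        obtain ⟨μ, hμ⟩ := key b hb
        have hassoc : (algebraMap ℂ A μ) * a = b * (algebraMap ℂ A c) := by
          rw [← hμ, ← hc, mul_assoc]
        have h1 : c • b = μ • a := by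
          rw [Algebra.smul_def, Algebra.smul_def, Algebra.commutes c b, ← hassoc]
        have : b = (c⁻¹ * μ) • a := by
          rw [mul_smul, ← h1, smul_smul, inv_mul_cancel₀ hc0, one_smul]
        rw [this]
        exact Submodule.smul_mem _ _ (Submodule.mem_span_singleton_self a)
      · rw [Submodule.span_singleton_le_iff_mem]; exact haγ
    rw [hspan]
    exact finrank_span_singleton ha0
  · -- existence of α with α² = 1
    obtain ⟨d, hd⟩ := IsAlgClosed.exists_pow_nat_eq c (n := 2) (by norm_num)
    have hd0 : d ≠ 0 := by rintro rfl; rw [zero_pow (by norm_num)] at hd; exact hc0 hd.symm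
    refine ⟨d⁻¹ • a, Submodule.smul_mem _ _ haγ, ?_⟩
    rw [smul_mul_smul_comm, hc, Algebra.algebraMap_eq_smul_one, smul_smul]
    rw [show d⁻¹ * d⁻¹ * c = 1 by field_simp [← hd]; rw [← hd], one_smul]
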